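/- Let Σ_x and Σ̃_e be m × m real symmetric positive definite matrices with all diagonal entries equal to 1. Let B = diag(b₁, …, b_m) and L = diag(l₁, …, l_m) be diagonal matrices with entries in [−1, 1] satisfying B² + L² = I. Then J(B, L) ≥ 0, where J(B, L) := − log det Σ_x − log det Σ̃_e + log det(B Σ_x B + L Σ̃_e L) + log det(L Σ_x L + B Σ̃_e B). -/

import Mathlib

open Matrix

lemma one_le_det_one_add {n : Type*} [Fintype n] [DecidableEq n]
    {M : Matrix n n ℝ} (hM : M.PosSemidef) : 1 ≤ (1 + M).det := by
  have h1 : (1 + M).PosSemidef := Matrix.PosSemidef.add Matrix.PosSemidef.one hM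
  have hherm := h1.isHermitian
  have hev : ∀ i, (1:ℝ) ≤ hherm.eigenvalues i := by
    intro i
    set v : n → ℝ := ⇑(hherm.eigenvectorBasis i) with hv
    have hvmul : (1 + M) *ᵥ v = hherm.eigenvalues i • v := hherm.mulVec_eigenvectorBasis i
    have hv0 : v ≠ 0 := by
      have := (hherm.eigenvectorBasis.orthonormal).ne_zero i
      exact fun h => this (by ext j; exact congrFun h j)
    have hMv : M *ᵥ v = (hherm.eigenvalues i - 1) • v := by
      rw [add_mulVec, one_mulVec] at hvmul
      rw [sub_smul, one_smul, ← hvmul]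
      abel
    have h2 : (0:ℝ) ≤ star v ⬝ᵥ (M *ᵥ v) := hM.dotProduct_mulVec_nonneg v
    rw [hMv, dotProduct_smul, smul_eq_mul] at h2
    have h3 : (0:ℝ) < star v ⬝ᵥ v := by
      have hnn : (0:ℝ) ≤ star v ⬝ᵥ v := dotProduct_star_self_nonneg v
      rcases hnn.lt_or_eq with h | h
      · exact h
      · exact absurd (dotProduct_star_self_eq_zero.mp h.symm) hv0
    nlinarith
  have hdet : (1 + M).det = ∏ i, hherm.eigenvalues i := by
    rw [hherm.det_eq_prod_eigenvalues]; norm_num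
  rw [hdet]
  calc (1:ℝ) = ∏ _i : n, (1:ℝ) := by simp
  _ ≤ ∏ i, hherm.eigenvalues i :=
    Finset.prod_le_prod (fun _ _ => zero_le_one) (fun i _ => hev i)

open scoped MatrixOrder in
lemma det_le_det_add {n : Type*} [Fintype n] [DecidableEq n]
    {A B : Matrix n n ℝ} (hA : A.PosSemidef) (hB : B.PosSemidef) :
    A.det ≤ (A + B).det := by
  rcases eq_or_ne A.det 0 with hd | hd
  · rw [hd]
    have hAB : (A + B).PosSemidef := hA.add hB
    have hherm := hAB.isHermitian
    have hdet : (A + B).det = ∏ i, hherm.eigenvalues i := by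
      rw [hherm.det_eq_prod_eigenvalues]; norm_num
    rw [hdet]
    exact Finset.prod_nonneg fun i _ => hAB.eigenvalues_nonneg i
  · set R := CFC.sqrt A with hR
    have hRps : R.PosSemidef := Matrix.nonneg_iff_posSemidef.mp (CFC.sqrt_nonneg A)
    have hRR : R * R = A := CFC.sqrt_mul_sqrt_self A (Matrix.nonneg_iff_posSemidef.mpr hA)
    have hdR : R.det * R.det = A.det := by rw [← det_mul, hRR]
    have hdR0 : R.det ≠ 0 := fun h => hd (by rw [← hdR, h, zero_mul])
    have hRu : IsUnit R.det := isUnit_iff_ne_zero.mpr hdR0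
    have hRinv : R * R⁻¹ = 1 := mul_nonsing_inv R hRu
    have hRinv' : R⁻¹ * R = 1 := nonsing_inv_mul R hRu
    have hRHerm : Rᴴ = R := hRps.isHermitian
    have hM : ((R⁻¹) * B * (R⁻¹)).PosSemidef := by
      have := hB.conjTranspose_mul_mul_same (R⁻¹)
      rwa [conjTranspose_nonsing_inv, hRHerm] at this
    have key : A + B = R * (1 + R⁻¹ * B * R⁻¹) * R := by
      rw [Matrix.mul_add, Matrix.add_mul, Matrix.mul_one, hRR]
      congr 1
      symm
      calc R * (R⁻¹ * B * R⁻¹) * R = R * R⁻¹ * B * (R⁻¹ * R) := by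
            simp only [Matrix.mul_assoc]
      _ = B := by rw [hRinv, hRinv', Matrix.one_mul, Matrix.mul_one]
    rw [key, det_mul, det_mul]
    have h1 := one_le_det_one_add hM
    have hA0 : 0 < A.det := by
      rcases hdR.symm ▸ (mul_self_nonneg R.det) with h
      exact lt_of_le_of_ne (hdR ▸ mul_self_nonneg R.det) (Ne.symm hd)
    nlinarith [hdR]

lemma diag_conj_dot {m : ℕ} (S : Matrix (Fin m) (Fin m) ℝ) (d x : Fin m → ℝ) :
    star x ⬝ᵥ ((diagonal d * S * diagonal d) *ᵥ x)
      = star (diagonal d *ᵥ x) ⬝ᵥ (S *ᵥ (diagonal d *ᵥ x)) := by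
  rw [← mulVec_mulVec, ← mulVec_mulVec]
  simp only [star_trivial, dotProduct, mulVec_diagonal, Finset.mul_sum]
  congr 1
  ext i
  ring

lemma posDef_conj_add {m : ℕ} {Sx Se : Matrix (Fin m) (Fin m) ℝ} (hx : Sx.PosDef) (he : Se.PosDef)
    (b l : Fin m → ℝ) (hbl : ∀ i, b i ^ 2 + l i ^ 2 = 1) :
    (diagonal b * Sx * diagonal b + diagonal l * Se * diagonal l).PosDef := by
  have hdb : (diagonal b)ᴴ = diagonal b := by simp [diagonal_conjTranspose]
  have hdl : (diagonal l)ᴴ = diagonal l := by simp [diagonal_conjTranspose]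
  have h1 : (diagonal b * Sx * diagonal b).PosSemidef := by
    have := hx.posSemidef.conjTranspose_mul_mul_same (diagonal b)
    rwa [hdb] at this
  have h2 : (diagonal l * Se * diagonal l).PosSemidef := by
    have := he.posSemidef.conjTranspose_mul_mul_same (diagonal l)
    rwa [hdl] at this
  refine posDef_iff_dotProduct_mulVec.mpr ⟨(h1.add h2).isHermitian, fun x hx0 => ?_⟩
  rw [add_mulVec, dotProduct_add, diag_conj_dot, diag_conj_dot]
  -- at least one of the transformed vectors is nonzero
  obtain ⟨i, hi⟩ : ∃ i, x i ≠ 0 := Function.ne_iff.mp hx0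
  have hne : diagonal b *ᵥ x ≠ 0 ∨ diagonal l *ᵥ x ≠ 0 := by
    by_contra h
    push_neg at h
    have hb0 : b i * x i = 0 := by
      have := congrFun h.1 i; rwa [mulVec_diagonal] at this
    have hl0 : l i * x i = 0 := by
      have := congrFun h.2 i; rwa [mulVec_diagonal] at this
    have := hbl i
    rcases mul_eq_zero.mp hb0 with hb' | hb'
    · rcases mul_eq_zero.mp hl0 with hl' | hl'
      · rw [hb', hl'] at this; norm_num at this
      · exact hi hl'
    · exact hi hb'
  rcases hne with h | h
  · have := hx.dotProduct_mulVec_pos h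
    have h2' := he.posSemidef.dotProduct_mulVec_nonneg (diagonal l *ᵥ x)
    linarith [this, h2']
  · have := he.dotProduct_mulVec_pos h
    have h1' := hx.posSemidef.dotProduct_mulVec_nonneg (diagonal b *ᵥ x)
    linarith [this, h1']

lemma det_prod_le_aux {m : ℕ} (Sx Se : Matrix (Fin m) (Fin m) ℝ)
    (hx : Sx.PosDef) (he : Se.PosDef)
    (b l : Fin m → ℝ)
    (hbl : ∀ i, b i ^ 2 + l i ^ 2 = 1) :
    Sx.det * Se.det ≤ (diagonal b * Sx * diagonal b + diagonal l * Se * diagonal l).det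
      * (diagonal l * Sx * diagonal l + diagonal b * Se * diagonal b).det := by
  classical
  set db := diagonal b with hdbdef
  set dl := diagonal l with hdldef
  set A := db * Sx * db + dl * Se * dl with hAdef
  set D := dl * Sx * dl + db * Se * db with hDdef
  set C := db * Sx * dl - dl * Se * db with hCdef
  have hdbH : dbᴴ = db := by simp [hdbdef, diagonal_conjTranspose]
  have hdlH : dlᴴ = dl := by simp [hdldef, diagonal_conjTranspose]
  have hCH : Cᴴ = dl * Sx * db - db * Se * dl := by
    simp only [hCdef, conjTranspose_sub, conjTranspose_mul, hdbH, hdlH,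
      hx.isHermitian.eq, he.isHermitian.eq, Matrix.mul_assoc]
  set U : Matrix (Fin m ⊕ Fin m) (Fin m ⊕ Fin m) ℝ := fromBlocks db dl dl (-db) with hUdef
  set S : Matrix (Fin m ⊕ Fin m) (Fin m ⊕ Fin m) ℝ := fromBlocks Sx 0 0 Se with hSdef
  have hbb : db * db + dl * dl = 1 := by
    rw [hdbdef, hdldef, diagonal_mul_diagonal, diagonal_mul_diagonal, diagonal_add]
    have h1 : (fun i => b i * b i + l i * l i) = fun _ : Fin m => (1:ℝ) :=
      funext fun i => by nlinarith [hbl i]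
    rw [h1]
    exact diagonal_one
  have hcomm : db * dl = dl * db := by
    rw [hdbdef, hdldef, diagonal_mul_diagonal, diagonal_mul_diagonal]
    ext i j
    by_cases h : i = j <;> simp [diagonal, h, mul_comm]
  have hUU : U * U = 1 := by
    rw [hUdef, fromBlocks_multiply, Matrix.mul_neg, Matrix.neg_mul, neg_mul_neg, hcomm,
      add_neg_cancel, hbb, add_comm (dl * dl) (db * db), hbb, fromBlocks_one]
  have hN : U * S * U = fromBlocks A C Cᴴ D := by
    rw [hUdef, hSdef, fromBlocks_multiply, fromBlocks_multiply, hCH]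
    congr 1 <;>
      simp only [Matrix.mul_zero, Matrix.zero_mul, add_zero, zero_add, Matrix.mul_neg,
        Matrix.neg_mul, neg_neg, hAdef, hDdef, hCdef] <;>
      first
        | rfl
        | (rw [sub_eq_add_neg])
        | abel
  -- PosSemidef of S
  haveI : Invertible Se := he.isUnit.invertible
  have hSps : S.PosSemidef := by
    have h := (PosDef.fromBlocks₂₂ Sx (0 : Matrix (Fin m) (Fin m) ℝ) he)
    rw [conjTranspose_zero] at h
    rw [hSdef]
    refine h.mpr ?_
    simpa using hx.posSemidef
  have hNps : (fromBlocks A C Cᴴ D).PosSemidef := by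
    rw [← hN]
    have := hSps.mul_mul_conjTranspose_same U
    have hUH : Uᴴ = U := by
      rw [hUdef, fromBlocks_conjTranspose, conjTranspose_neg, hdbH, hdlH]
    rwa [hUH] at this
  -- determinant of N
  have hdetU : U.det * U.det = 1 := by rw [← det_mul, hUU, det_one]
  have hdetS : S.det = Sx.det * Se.det := by
    rw [hSdef, det_fromBlocks_zero₂₁]
  have hdetN : (fromBlocks A C Cᴴ D).det = Sx.det * Se.det := by
    rw [← hN, det_mul, det_mul,
      show U.det * S.det * U.det = S.det * (U.det * U.det) by ring, hdetU, mul_one, hdetS]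
  -- Schur complement
  have hA_pd : A.PosDef := by
    exact posDef_conj_add hx he b l hbl
  haveI : Invertible A := hA_pd.isUnit.invertible
  have hSchur : (D - Cᴴ * A⁻¹ * C).PosSemidef :=
    (PosDef.fromBlocks₁₁ C D hA_pd).mp hNps
  have hdet2 : Sx.det * Se.det = A.det * (D - Cᴴ * A⁻¹ * C).det := by
    rw [← hdetN, det_fromBlocks₁₁, invOf_eq_nonsing_inv]
  have hCC : (Cᴴ * A⁻¹ * C).PosSemidef :=
    (hA_pd.inv.posSemidef).conjTranspose_mul_mul_same C
  have hmono : (D - Cᴴ * A⁻¹ * C).det ≤ D.det := by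
    have h := det_le_det_add hSchur hCC
    rwa [sub_add_cancel] at h
  rw [hdet2]
  have hdetA : 0 < A.det := hA_pd.det_pos
  calc A.det * (D - Cᴴ * A⁻¹ * C).det ≤ A.det * D.det :=
    mul_le_mul_of_nonneg_left hmono hdetA.le


theorem stmt2 {m : ℕ} (Sx Se : Matrix (Fin m) (Fin m) ℝ)
    (hx : Sx.PosDef) (he : Se.PosDef)
    (hxd : ∀ i, Sx i i = 1) (hed : ∀ i, Se i i = 1)
    (b l : Fin m → ℝ)
    (hb : ∀ i, b i ∈ Set.Icc (-1 : ℝ) 1) (hl : ∀ i, l i ∈ Set.Icc (-1 : ℝ) 1)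
    (hbl : ∀ i, b i ^ 2 + l i ^ 2 = 1) :
    0 ≤ - Real.log Sx.det - Real.log Se.det
      + Real.log (Matrix.diagonal b * Sx * Matrix.diagonal b
          + Matrix.diagonal l * Se * Matrix.diagonal l).det
      + Real.log (Matrix.diagonal l * Sx * Matrix.diagonal l
          + Matrix.diagonal b * Se * Matrix.diagonal b).det := by
  have hkey := det_prod_le_aux Sx Se hx he b l hbl
  have hA_pd : (Matrix.diagonal b * Sx * Matrix.diagonal b
      + Matrix.diagonal l * Se * Matrix.diagonal l).PosDef := posDef_conj_add hx he b l hbl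
  have hD_pd : (Matrix.diagonal l * Sx * Matrix.diagonal l
      + Matrix.diagonal b * Se * Matrix.diagonal b).PosDef :=
    posDef_conj_add hx he l b (fun i => by have := hbl i; nlinarith)
  have h1 : 0 < Sx.det := hx.det_pos
  have h2 : 0 < Se.det := he.det_pos
  have h3 := hA_pd.det_pos
  have h4 := hD_pd.det_pos
  have hlog : Real.log (Sx.det * Se.det)
      ≤ Real.log ((Matrix.diagonal b * Sx * Matrix.diagonal b
          + Matrix.diagonal l * Se * Matrix.diagonal l).det
        * (Matrix.diagonal l * Sx * Matrix.diagonal l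
          + Matrix.diagonal b * Se * Matrix.diagonal b).det) :=
    Real.log_le_log (by positivity) hkey
  rw [Real.log_mul h1.ne' h2.ne', Real.log_mul h3.ne' h4.ne'] at hlog
  linarith
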